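/- Let L ⊆ C(0,0,0) be a lower set in Z^3 with U = C(0,0,0) \ L finite, and let I = {(i,j,k) ∈ L : (i+1,j+1,k+1) ∉ L}. Let N be a cutoff for I, i.e., (i,j,k) ∈ I whenever i+j+k ≤ -N and max{i,j,k} = 0 (with i,j,k ≤ 0), and (i,j,k) ∉ I whenever i+j+k ≤ -N-3 and max{i,j,k} < 0. Then J = {(i,j,k) ∈ I : i+j+k ≥ -N-2} contains exactly 3·C(N+3,2)+1 points and exactly 3·C(N+2,2) rhombi, where a rhombus is any of the sets r_a(i,j,k) = {(i,j,k),(i,j-1,k),(i,j,k-1),(i,j-1,k-1)}, r_b(i,j,k) = {(i,j,k),(i-1,j,k),(i,j,k-1),(i-1,j,k-1)}, r_c(i,j,k) = {(i,j,k),(i-1,j,k),(i,j-1,k),(i-1,j-1,k)} contained entirely in I. -/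

import Mathlib

/-! ### Auxiliary counting lemmas -/

private def csPfin (K : ℕ) : Finset (ℕ × ℕ) :=
  (Finset.range (K+1) ×ˢ Finset.range (K+1)).filter (fun p => p.1 + p.2 ≤ K)

private lemma csPfin_eq (K : ℕ) :
    csPfin K = (Finset.range (K+1)).biUnion (fun s => Finset.HasAntidiagonal.antidiagonal s) := by
  ext p
  simp [csPfin, Finset.mem_filter, Finset.mem_product, Finset.mem_antidiagonal]
  omega

private lemma cs_two_mul_choose (n : ℕ) : 2 * Nat.choose (n+2) 2 = (n+2)*(n+1) := by
  induction n with
  | zero => decide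
  | succ m ih =>
    rw [show m+1+2 = (m+2)+1 from rfl, Nat.choose_succ_succ (m+2) 1, Nat.choose_one_right,
      Nat.mul_add, ih]
    ring

private lemma csPfin_card (K : ℕ) : (csPfin K).card = Nat.choose (K+2) 2 := by
  rw [csPfin_eq, Finset.card_biUnion]
  · have h1 : ∑ s ∈ Finset.range (K+1), (Finset.HasAntidiagonal.antidiagonal s).card
        = ∑ s ∈ Finset.range (K+1), (s+1) := by
      apply Finset.sum_congr rfl; intro s _; exact Finset.Nat.card_antidiagonal s
    rw [h1]
    have h3 : (∑ s ∈ Finset.range (K+1), (s+1)) = ∑ i ∈ Finset.range (K+2), i := by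
      rw [Finset.sum_range_succ' (fun i => i) (K+1)]
      simp
    have h4 : (∑ i ∈ Finset.range (K+2), i) * 2 = (K+2)*(K+1) := by
      rw [Finset.sum_range_id_mul_two]
      congr 1
    have h2 := cs_two_mul_choose K
    set c := (K+2)*(K+1) with hc
    omega
  · intro x _ y _ hxy
    simp only [Finset.disjoint_left]
    intro p hp hq
    simp [Finset.mem_antidiagonal] at hp hq
    omega

private lemma csP_ncard (K : ℕ) : {p : ℕ × ℕ | p.1 + p.2 ≤ K}.ncard = Nat.choose (K+2) 2 := by
  have : {p : ℕ × ℕ | p.1 + p.2 ≤ K} = ↑(csPfin K) := by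
    ext p; simp [csPfin]; omega
  rw [this, Set.ncard_coe_finset, csPfin_card]

private lemma csP_fin (K : ℕ) : {p : ℕ × ℕ | p.1 + p.2 ≤ K}.Finite := by
  have : {p : ℕ × ℕ | p.1 + p.2 ≤ K} = ↑(csPfin K) := by
    ext p; simp [csPfin]; omega
  rw [this]; exact (csPfin K).finite_toSet

private lemma csReg_core (K0 K1 K2 : ℕ) (hA : K0 ≤ K1+1) (hB : K1 ≤ K0+2) (hC : K1 ≤ K2+1)
    (hD : K0 ≤ K2+2) (hE : K2 ≤ K0+1) :
    {v : ℤ×ℤ | v.1 + v.2 ≥ -(K0:ℤ) ∧ 2*v.1 - v.2 ≤ (K1:ℤ)+1 ∧ 2*v.2 - v.1 ≤ (K2:ℤ)+2}.Finite ∧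
    {v : ℤ×ℤ | v.1 + v.2 ≥ -(K0:ℤ) ∧ 2*v.1 - v.2 ≤ (K1:ℤ)+1 ∧ 2*v.2 - v.1 ≤ (K2:ℤ)+2}.ncard
      = Nat.choose (K0+2) 2 + Nat.choose (K1+2) 2 + Nat.choose (K2+2) 2 := by
  set S0 : Set (ℤ×ℤ) := (fun p : ℕ×ℕ => ((-(p.1:ℤ)), -(p.2:ℤ))) '' {p | p.1+p.2 ≤ K0} with hS0
  set S1 : Set (ℤ×ℤ) := (fun p : ℕ×ℕ => (((p.1:ℤ))+1, (p.1:ℤ)+1-(p.2:ℤ))) '' {p | p.1+p.2 ≤ K1} with hS1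
  set S2 : Set (ℤ×ℤ) := (fun p : ℕ×ℕ => ((p.1:ℤ)-(p.2:ℤ), (p.1:ℤ)+1)) '' {p | p.1+p.2 ≤ K2} with hS2
  have hinj0 : Function.Injective (fun p : ℕ×ℕ => ((-(p.1:ℤ)), -(p.2:ℤ))) := by
    intro p q h; simp [Prod.ext_iff] at h ⊢; omega
  have hinj1 : Function.Injective (fun p : ℕ×ℕ => (((p.1:ℤ))+1, (p.1:ℤ)+1-(p.2:ℤ))) := by
    intro p q h; simp [Prod.ext_iff] at h ⊢; omega
  have hinj2 : Function.Injective (fun p : ℕ×ℕ => ((p.1:ℤ)-(p.2:ℤ), (p.1:ℤ)+1)) := by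
    intro p q h; simp [Prod.ext_iff] at h ⊢; omega
  have hfin0 : S0.Finite := (csP_fin K0).image _
  have hfin1 : S1.Finite := (csP_fin K1).image _
  have hfin2 : S2.Finite := (csP_fin K2).image _
  have hsplit : {v : ℤ×ℤ | v.1 + v.2 ≥ -(K0:ℤ) ∧ 2*v.1 - v.2 ≤ (K1:ℤ)+1 ∧ 2*v.2 - v.1 ≤ (K2:ℤ)+2}
      = (S0 ∪ S1) ∪ S2 := by
    ext ⟨a,b⟩
    simp only [Set.mem_setOf_eq, Set.mem_union, hS0, hS1, hS2, Set.mem_image, Prod.ext_iff]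
    constructor
    · rintro ⟨h1, h2, h3⟩
      rcases le_or_gt a 0 with ha | ha
      · rcases le_or_gt b 0 with hb | hb
        · exact Or.inl (Or.inl ⟨((-a).toNat, (-b).toNat), by simp; omega, by simp; omega⟩)
        · exact Or.inr ⟨((b-1).toNat, (b-1-a).toNat), by simp; omega, by simp; omega⟩
      · rcases le_or_gt b a with hb | hb
        · exact Or.inl (Or.inr ⟨((a-1).toNat, (a-b).toNat), by simp; omega, by simp; omega⟩)
        · exact Or.inr ⟨((b-1).toNat, (b-1-a).toNat), by simp; omega, by simp; omega⟩
    · rintro ((⟨⟨x,y⟩, hxy, hab⟩ | ⟨⟨x,y⟩, hxy, hab⟩) | ⟨⟨x,y⟩, hxy, hab⟩) <;>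
        (simp only [Set.mem_setOf_eq] at hxy; simp at hab; omega)
  have hd01 : Disjoint S0 S1 := by
    rw [Set.disjoint_left]
    rintro ⟨a,b⟩ ⟨⟨x,y⟩, hxy, hab⟩ ⟨⟨x',y'⟩, hxy', hab'⟩
    simp [Prod.ext_iff] at hab hab'; omega
  have hd02 : Disjoint (S0 ∪ S1) S2 := by
    rw [Set.disjoint_left]
    rintro ⟨a,b⟩ (⟨⟨x,y⟩, hxy, hab⟩ | ⟨⟨x,y⟩, hxy, hab⟩) ⟨⟨x',y'⟩, hxy', hab'⟩ <;>
      (simp only [Set.mem_setOf_eq] at hxy hxy'; simp [Prod.ext_iff] at hab hab'; omega)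
  have hc0 : S0.ncard = Nat.choose (K0+2) 2 := by
    rw [hS0, Set.ncard_image_of_injective _ hinj0, csP_ncard]
  have hc1 : S1.ncard = Nat.choose (K1+2) 2 := by
    rw [hS1, Set.ncard_image_of_injective _ hinj1, csP_ncard]
  have hc2 : S2.ncard = Nat.choose (K2+2) 2 := by
    rw [hS2, Set.ncard_image_of_injective _ hinj2, csP_ncard]
  constructor
  · rw [hsplit]; exact ((hfin0.union hfin1).union hfin2)
  · rw [hsplit, Set.ncard_union_eq hd02 (hfin0.union hfin1) hfin2,
      Set.ncard_union_eq hd01 hfin0 hfin1, hc0, hc1, hc2]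

private lemma cs_double_count {α β : Type*} [DecidableEq α] [DecidableEq β] (s : Finset α)
    (g : α → β) (h2 : ∀ b ∈ s.image g, (s.filter (fun a => g a = b)).card = 2) :
    s.card = 2 * (s.image g).card := by
  rw [Finset.card_eq_sum_card_image g s, Finset.sum_congr rfl h2, Finset.sum_const,
    smul_eq_mul, Nat.mul_comm]

/-- The lower cone of a point in `ℤ³`. -/
def LowerCone (p : ℤ × ℤ × ℤ) : Set (ℤ × ℤ × ℤ) :=
  {q | q.1 ≤ p.1 ∧ q.2.1 ≤ p.2.1 ∧ q.2.2 ≤ p.2.2}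

/-- `L` is a lower set (order ideal) for the product order on `ℤ³`. -/
def IsLowerSet3 (L : Set (ℤ × ℤ × ℤ)) : Prop :=
  ∀ p ∈ L, LowerCone p ⊆ L

/-- The initial conditions determined by a lower set `L`. -/
def InitConds (L : Set (ℤ × ℤ × ℤ)) : Set (ℤ × ℤ × ℤ) :=
  {p ∈ L | (p.1 + 1, p.2.1 + 1, p.2.2 + 1) ∉ L}

/-- The type-`a` rhombus at `(i,j,k)`. -/
def rhombA (i j k : ℤ) : Set (ℤ × ℤ × ℤ) :=
  {(i, j, k), (i, j - 1, k), (i, j, k - 1), (i, j - 1, k - 1)}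

/-- The type-`b` rhombus at `(i,j,k)`. -/
def rhombB (i j k : ℤ) : Set (ℤ × ℤ × ℤ) :=
  {(i, j, k), (i - 1, j, k), (i, j, k - 1), (i - 1, j, k - 1)}

/-- The type-`c` rhombus at `(i,j,k)`. -/
def rhombC (i j k : ℤ) : Set (ℤ × ℤ × ℤ) :=
  {(i, j, k), (i - 1, j, k), (i, j - 1, k), (i - 1, j - 1, k)}

/-- `N` is a cutoff for the initial conditions `I`. -/
def IsCutoff (I : Set (ℤ × ℤ × ℤ)) (N : ℕ) : Prop :=
  (∀ i j k : ℤ, i ≤ 0 → j ≤ 0 → k ≤ 0 → i + j + k ≤ -(N : ℤ) →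
    max i (max j k) = 0 → (i, j, k) ∈ I) ∧
  (∀ i j k : ℤ, i + j + k ≤ -(N : ℤ) - 3 → max i (max j k) < 0 → (i, j, k) ∉ I)

/-- rhombus counting lemma: `J = {p ∈ I : i+j+k ≥ -N-2}` has
`3·C(N+3,2) + 1` points and contains exactly `3·C(N+2,2)` rhombi. -/
theorem stmt3 (L : Set (ℤ × ℤ × ℤ))
    (hlow : IsLowerSet3 L)
    (hsub : L ⊆ LowerCone (0, 0, 0))
    (hfin : (LowerCone (0, 0, 0) \ L).Finite)
    (N : ℕ) (hN : IsCutoff (InitConds L) N) :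
    {p ∈ InitConds L | p.1 + p.2.1 + p.2.2 ≥ -(N : ℤ) - 2}.ncard
        = 3 * Nat.choose (N + 3) 2 + 1 ∧
    {R : Set (ℤ × ℤ × ℤ) | (∃ i j k : ℤ, R = rhombA i j k ∨ R = rhombB i j k ∨
          R = rhombC i j k) ∧
        R ⊆ {p ∈ InitConds L | p.1 + p.2.1 + p.2.2 ≥ -(N : ℤ) - 2}}.ncard
      = 3 * Nat.choose (N + 2) 2 := by
  classical
  obtain ⟨hN1, hN2⟩ := hN
  -- Construct the height function f of the stepped surface.
  have hfex : ∀ a b : ℤ, ∃ i : ℤ, ∀ m : ℤ, ((m, m+a, m+b) ∈ L ↔ m ≤ i) := by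
    intro a b
    have hbdd : ∃ c : ℤ, ∀ m : ℤ, (m, m+a, m+b) ∈ L → m ≤ c :=
      ⟨0, fun m hm => (hsub hm).1⟩
    have hne : ∃ m : ℤ, (m, m+a, m+b) ∈ L := by
      by_contra hno
      push_neg at hno
      have hsubs : ((fun m : ℤ => ((m, m+a, m+b) : ℤ×ℤ×ℤ)) '' Set.Iic (-(max 0 (max a b))))
          ⊆ LowerCone (0,0,0) \ L := by
        rintro p ⟨m, hm, rfl⟩
        simp only [Set.mem_Iic] at hm
        exact ⟨⟨by simp; omega, by simp; omega, by simp; omega⟩, hno m⟩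
      have hinf : ((fun m : ℤ => ((m, m+a, m+b):ℤ×ℤ×ℤ)) '' Set.Iic (-(max 0 (max a b)))).Infinite := by
        apply Set.Infinite.image
        · intro x _ y _ h
          simpa using congrArg Prod.fst h
        · exact Set.Iic_infinite _
      exact hinf (hfin.subset hsubs)
    obtain ⟨ub, hub1, hub2⟩ := Int.exists_greatest_of_bdd hbdd hne
    refine ⟨ub, fun m => ⟨hub2 m, fun hm => ?_⟩⟩
    exact hlow _ hub1 ⟨by simpa using hm, by simp; omega, by simp; omega⟩
  choose f hf using hfex
  -- Membership reformulations.
  have hLmem : ∀ x y z : ℤ, ((x,y,z) : ℤ×ℤ×ℤ) ∈ L ↔ x ≤ f (y-x) (z-x) := by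
    intro x y z
    have h := hf (y-x) (z-x) x
    have hp : ((x, x+(y-x), x+(z-x)) : ℤ×ℤ×ℤ) = (x,y,z) := by
      refine Prod.ext rfl (Prod.ext ?_ ?_) <;> simp
    rwa [hp] at h
  have hImem : ∀ x y z : ℤ, ((x,y,z) : ℤ×ℤ×ℤ) ∈ InitConds L ↔ x = f (y-x) (z-x) := by
    intro x y z
    have h1 := hLmem x y z
    have h2 := hLmem (x+1) (y+1) (z+1)
    simp only [InitConds, Set.mem_setOf_eq, h1, h2]
    have e1 : y+1-(x+1) = y - x := by ring
    have e2 : z+1-(x+1) = z - x := by ring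
    rw [e1, e2]
    omega
  -- Monotonicity of `f`.
  have hfL : ∀ a b : ℤ, ((f a b, f a b + a, f a b + b) : ℤ×ℤ×ℤ) ∈ L :=
    fun a b => (hf a b (f a b)).2 le_rfl
  have mono1 : ∀ a b : ℤ, f a b ≤ f (a-1) b := by
    intro a b
    have h2 : ((f a b, f a b + (a-1), f a b + b) : ℤ×ℤ×ℤ) ∈ L :=
      hlow _ (hfL a b) ⟨le_rfl, by dsimp only; omega, le_rfl⟩
    exact (hf (a-1) b (f a b)).1 h2
  have mono2 : ∀ a b : ℤ, f a b ≤ f a (b-1) := by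
    intro a b
    have h2 : ((f a b, f a b + a, f a b + (b-1)) : ℤ×ℤ×ℤ) ∈ L :=
      hlow _ (hfL a b) ⟨le_rfl, le_rfl, by dsimp only; omega⟩
    exact (hf a (b-1) (f a b)).1 h2
  have mono3 : ∀ a b : ℤ, f (a-1) (b-1) ≤ f a b + 1 := by
    intro a b
    have h2 : ((f (a-1) (b-1) - 1, (f (a-1) (b-1) - 1) + a, (f (a-1) (b-1) - 1) + b) : ℤ×ℤ×ℤ) ∈ L :=
      hlow _ (hfL (a-1) (b-1)) ⟨by dsimp only; omega, by dsimp only; omega, by dsimp only; omega⟩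
    have := (hf a b _).1 h2
    omega
  -- f is below the cone boundary.
  have ftop : ∀ a b : ℤ, f a b + max 0 (max a b) ≤ 0 := by
    intro a b
    have h2 := hsub (hfL a b)
    simp only [LowerCone, Set.mem_setOf_eq] at h2
    omega
  -- Cutoff conditions.
  have hc1 : ∀ a b : ℤ, a + b - 3 * max 0 (max a b) ≤ -(N:ℤ) → f a b = -(max 0 (max a b)) := by
    intro a b h
    have hmem := hN1 (-(max 0 (max a b))) (-(max 0 (max a b)) + a) (-(max 0 (max a b)) + b)
      (by omega) (by omega) (by omega) (by omega) (by omega)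
    have h2 := (hImem _ _ _).1 hmem
    have e1 : -(max 0 (max a b)) + a - -(max 0 (max a b)) = a := by ring
    have e2 : -(max 0 (max a b)) + b - -(max 0 (max a b)) = b := by ring
    rw [e1, e2] at h2
    omega
  have hc2 : ∀ a b : ℤ, 3 * f a b + a + b ≤ -(N:ℤ) - 3 → f a b = -(max 0 (max a b)) := by
    intro a b h
    by_contra hne
    have hlt : f a b + max 0 (max a b) < 0 := by
      have := ftop a b; omega
    have hI : ((f a b, f a b + a, f a b + b) : ℤ×ℤ×ℤ) ∈ InitConds L := by
      rw [hImem]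
      have e1 : f a b + a - f a b = a := by ring
      have e2 : f a b + b - f a b = b := by ring
      rw [e1, e2]
    exact hN2 (f a b) (f a b + a) (f a b + b) (by omega) (by omega) hI
  -- The planar region.
  set R2 : Set (ℤ×ℤ) := {q : ℤ×ℤ | 3 * f q.1 q.2 + q.1 + q.2 ≥ -(N:ℤ) - 2} with hR2
  have g_iff : ∀ a b : ℤ, ((a,b) ∈ R2 ↔ a + b - 3 * max 0 (max a b) ≥ -(N:ℤ) - 2) := by
    intro a b
    simp only [hR2, Set.mem_setOf_eq]
    constructor
    · intro h
      by_contra hS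
      push_neg at hS
      have := hc1 a b (by omega)
      omega
    · intro h
      by_contra hg
      push_neg at hg
      have := hc2 a b (by omega)
      omega
  set JS : Set (ℤ×ℤ×ℤ) := {p ∈ InitConds L | p.1 + p.2.1 + p.2.2 ≥ -(N : ℤ) - 2} with hJS
  have hJmem : ∀ x y z : ℤ, ((x,y,z) : ℤ×ℤ×ℤ) ∈ JS ↔ (x = f (y-x) (z-x) ∧ (y-x, z-x) ∈ R2) := by
    intro x y z
    simp only [hJS, Set.sep_setOf, Set.mem_setOf_eq, hImem x y z, hR2]
    constructor <;> rintro ⟨h1, h2⟩ <;> refine ⟨h1, ?_⟩ <;> omega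
  -- Part 1: J is in bijection with R2.
  have hJeq : JS = (fun q : ℤ×ℤ => ((f q.1 q.2, f q.1 q.2 + q.1, f q.1 q.2 + q.2) : ℤ×ℤ×ℤ)) '' R2 := by
    ext ⟨x,y,z⟩
    constructor
    · intro hp
      obtain ⟨h1, h2⟩ := (hJmem x y z).1 hp
      refine ⟨(y-x, z-x), h2, ?_⟩
      simp only
      rw [← h1]
      refine Prod.ext rfl (Prod.ext ?_ ?_) <;> simp
    · rintro ⟨⟨a,b⟩, hq, hqe⟩
      simp only at hqe
      rw [← hqe]
      rw [hJmem]
      have e1 : f a b + a - f a b = a := by ring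
      have e2 : f a b + b - f a b = b := by ring
      rw [e1, e2]
      exact ⟨rfl, hq⟩
  have hinjJ : Function.Injective (fun q : ℤ×ℤ => ((f q.1 q.2, f q.1 q.2 + q.1, f q.1 q.2 + q.2):ℤ×ℤ×ℤ)) := by
    rintro ⟨a,b⟩ ⟨a',b'⟩ h
    simp only [Prod.mk.injEq] at h
    simp only [Prod.mk.injEq]
    omega
  have hR2S : R2 = {v : ℤ×ℤ | v.1 + v.2 ≥ -((N+2:ℕ):ℤ) ∧ 2*v.1 - v.2 ≤ ((N+1:ℕ):ℤ)+1 ∧ 2*v.2 - v.1 ≤ ((N:ℕ):ℤ)+2} := by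
    ext ⟨a,b⟩
    rw [g_iff a b]
    simp only [Set.mem_setOf_eq]
    push_cast
    omega
  obtain ⟨hRfin, hRcard⟩ := csReg_core (N+2) (N+1) N (by omega) (by omega) (by omega) (by omega) (by omega)
  have hR2fin : R2.Finite := by rw [hR2S]; exact hRfin
  have part1 : JS.ncard = 3 * Nat.choose (N+3) 2 + 1 := by
    rw [hJeq, Set.ncard_image_of_injective _ hinjJ, hR2S, hRcard]
    have c1 := cs_two_mul_choose (N+2)
    have c2 := cs_two_mul_choose (N+1)
    have c3 := cs_two_mul_choose N
    have e1 : N+2+2 = N+4 := by omega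
    have e2 : N+1+2 = N+3 := by omega
    rw [e1] at c1
    rw [e2] at c2
    have key : (N+4)*(N+3) + (N+3)*(N+2) + (N+2)*(N+1) = 3*((N+3)*(N+2)) + 2 := by ring
    rw [e1, e2]
    set x1 := Nat.choose (N+4) 2
    set x2 := Nat.choose (N+3) 2
    set x3 := Nat.choose (N+2) 2
    set y1 := (N+4)*(N+3)
    set y2 := (N+3)*(N+2)
    set y3 := (N+2)*(N+1)
    omega
  refine ⟨part1, ?_⟩
  -- ===================== PART 2 =====================
  have hR2mem : ∀ u v : ℤ, (((u,v) : ℤ×ℤ) ∈ R2) ↔ 3 * f u v + u + v ≥ -(N:ℤ) - 2 := by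
    intro u v; rw [hR2]; exact Iff.rfl
  -- Rhombus-subset characterizations.
  have subA : ∀ i a b : ℤ,
      (rhombA i (i+a) (i+b) ⊆ JS ↔
        (i = f a b ∧ i = f (a-1) b ∧ i = f a (b-1) ∧ i = f (a-1) (b-1) ∧
         (a,b) ∈ R2 ∧ (a-1,b) ∈ R2 ∧ (a,b-1) ∈ R2 ∧ (a-1,b-1) ∈ R2)) := by
    intro i a b
    simp only [rhombA]
    rw [Set.insert_subset_iff, Set.insert_subset_iff, Set.insert_subset_iff,
      Set.singleton_subset_iff, hJmem, hJmem, hJmem, hJmem]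
    rw [show i + a - i = a from by ring, show i + b - i = b from by ring,
        show i + a - 1 - i = a - 1 from by ring, show i + b - 1 - i = b - 1 from by ring]
    tauto
  have subB : ∀ i a b : ℤ,
      (rhombB i (i+a) (i+b) ⊆ JS ↔
        (i = f a b ∧ i - 1 = f (a+1) (b+1) ∧ i = f a (b-1) ∧ i - 1 = f (a+1) b ∧
         (a,b) ∈ R2 ∧ (a+1,b+1) ∈ R2 ∧ (a,b-1) ∈ R2 ∧ (a+1,b) ∈ R2)) := by
    intro i a b
    simp only [rhombB]
    rw [Set.insert_subset_iff, Set.insert_subset_iff, Set.insert_subset_iff,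
      Set.singleton_subset_iff, hJmem, hJmem, hJmem, hJmem]
    rw [show i + a - i = a from by ring, show i + b - i = b from by ring,
        show i + a - (i-1) = a + 1 from by ring, show i + b - (i-1) = b + 1 from by ring,
        show i + b - 1 - i = b - 1 from by ring, show i + b - 1 - (i-1) = b from by ring]
    tauto
  have subC : ∀ i a b : ℤ,
      (rhombC i (i+a) (i+b) ⊆ JS ↔
        (i = f a b ∧ i - 1 = f (a+1) (b+1) ∧ i = f (a-1) b ∧ i - 1 = f a (b+1) ∧
         (a,b) ∈ R2 ∧ (a+1,b+1) ∈ R2 ∧ (a-1,b) ∈ R2 ∧ (a,b+1) ∈ R2)) := by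
    intro i a b
    simp only [rhombC]
    rw [Set.insert_subset_iff, Set.insert_subset_iff, Set.insert_subset_iff,
      Set.singleton_subset_iff, hJmem, hJmem, hJmem, hJmem]
    rw [show i + a - i = a from by ring, show i + b - i = b from by ring,
        show i + a - (i-1) = a + 1 from by ring, show i + b - (i-1) = b + 1 from by ring,
        show i + a - 1 - i = a - 1 from by ring, show i + a - 1 - (i-1) = a from by ring]
    tauto
  have subB' : ∀ i a b : ℤ,
      (rhombB i (i+(a-1)) (i+(b-1)) ⊆ JS ↔
        (i = f (a-1) (b-1) ∧ i - 1 = f a b ∧ i = f (a-1) (b-2) ∧ i - 1 = f a (b-1) ∧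
         (a-1,b-1) ∈ R2 ∧ (a,b) ∈ R2 ∧ (a-1,b-2) ∈ R2 ∧ (a,b-1) ∈ R2)) := by
    intro i a b
    simp only [rhombB]
    rw [Set.insert_subset_iff, Set.insert_subset_iff, Set.insert_subset_iff,
      Set.singleton_subset_iff, hJmem, hJmem, hJmem, hJmem]
    rw [show i + (a-1) - i = a - 1 from by ring, show i + (b-1) - i = b - 1 from by ring,
        show i + (a-1) - (i-1) = a from by ring, show i + (b-1) - (i-1) = b from by ring,
        show i + (b-1) - 1 - i = b - 2 from by ring,
        show i + (b-1) - 1 - (i-1) = b - 1 from by ring]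
    tauto
  have subB'' : ∀ i a b : ℤ,
      (rhombB i (i+(a-1)) (i+b) ⊆ JS ↔
        (i = f (a-1) b ∧ i - 1 = f a (b+1) ∧ i = f (a-1) (b-1) ∧ i - 1 = f a b ∧
         (a-1,b) ∈ R2 ∧ (a,b+1) ∈ R2 ∧ (a-1,b-1) ∈ R2 ∧ (a,b) ∈ R2)) := by
    intro i a b
    simp only [rhombB]
    rw [Set.insert_subset_iff, Set.insert_subset_iff, Set.insert_subset_iff,
      Set.singleton_subset_iff, hJmem, hJmem, hJmem, hJmem]
    rw [show i + (a-1) - i = a - 1 from by ring, show i + b - i = b from by ring,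
        show i + (a-1) - (i-1) = a from by ring, show i + b - (i-1) = b + 1 from by ring,
        show i + b - 1 - i = b - 1 from by ring, show i + b - 1 - (i-1) = b from by ring]
    tauto
  have subC' : ∀ i a b : ℤ,
      (rhombC i (i+a) (i+(b-1)) ⊆ JS ↔
        (i = f a (b-1) ∧ i - 1 = f (a+1) b ∧ i = f (a-1) (b-1) ∧ i - 1 = f a b ∧
         (a,b-1) ∈ R2 ∧ (a+1,b) ∈ R2 ∧ (a-1,b-1) ∈ R2 ∧ (a,b) ∈ R2)) := by
    intro i a b
    simp only [rhombC]
    rw [Set.insert_subset_iff, Set.insert_subset_iff, Set.insert_subset_iff,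
      Set.singleton_subset_iff, hJmem, hJmem, hJmem, hJmem]
    rw [show i + a - i = a from by ring, show i + (b-1) - i = b - 1 from by ring,
        show i + a - (i-1) = a + 1 from by ring, show i + (b-1) - (i-1) = b from by ring,
        show i + a - 1 - i = a - 1 from by ring, show i + a - 1 - (i-1) = a from by ring]
    tauto
  have subC'' : ∀ i a b : ℤ,
      (rhombC i (i+(a-1)) (i+(b-1)) ⊆ JS ↔
        (i = f (a-1) (b-1) ∧ i - 1 = f a b ∧ i = f (a-2) (b-1) ∧ i - 1 = f (a-1) b ∧
         (a-1,b-1) ∈ R2 ∧ (a,b) ∈ R2 ∧ (a-2,b-1) ∈ R2 ∧ (a-1,b) ∈ R2)) := by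
    intro i a b
    simp only [rhombC]
    rw [Set.insert_subset_iff, Set.insert_subset_iff, Set.insert_subset_iff,
      Set.singleton_subset_iff, hJmem, hJmem, hJmem, hJmem]
    rw [show i + (a-1) - i = a - 1 from by ring, show i + (b-1) - i = b - 1 from by ring,
        show i + (a-1) - (i-1) = a from by ring, show i + (b-1) - (i-1) = b from by ring,
        show i + (a-1) - 1 - i = a - 2 from by ring,
        show i + (a-1) - 1 - (i-1) = a - 1 from by ring]
    tauto
  -- Rhombus rigidity lemmas.
  have hAA : ∀ u v w u' v' w' : ℤ, rhombA u v w = rhombA u' v' w' → u = u' ∧ v = v' ∧ w = w' := by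
    intro u v w u' v' w' h
    have m1 : ((u,v,w) : ℤ×ℤ×ℤ) ∈ rhombA u' v' w' := by rw [← h]; simp [rhombA]
    have m2 : ((u',v',w') : ℤ×ℤ×ℤ) ∈ rhombA u v w := by rw [h]; simp [rhombA]
    simp only [rhombA, Set.mem_insert_iff, Set.mem_singleton_iff, Prod.mk.injEq] at m1 m2
    omega
  have hBB : ∀ u v w u' v' w' : ℤ, rhombB u v w = rhombB u' v' w' → u = u' ∧ v = v' ∧ w = w' := by
    intro u v w u' v' w' h
    have m1 : ((u,v,w) : ℤ×ℤ×ℤ) ∈ rhombB u' v' w' := by rw [← h]; simp [rhombB]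
    have m2 : ((u',v',w') : ℤ×ℤ×ℤ) ∈ rhombB u v w := by rw [h]; simp [rhombB]
    simp only [rhombB, Set.mem_insert_iff, Set.mem_singleton_iff, Prod.mk.injEq] at m1 m2
    omega
  have hCC : ∀ u v w u' v' w' : ℤ, rhombC u v w = rhombC u' v' w' → u = u' ∧ v = v' ∧ w = w' := by
    intro u v w u' v' w' h
    have m1 : ((u,v,w) : ℤ×ℤ×ℤ) ∈ rhombC u' v' w' := by rw [← h]; simp [rhombC]
    have m2 : ((u',v',w') : ℤ×ℤ×ℤ) ∈ rhombC u v w := by rw [h]; simp [rhombC]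
    simp only [rhombC, Set.mem_insert_iff, Set.mem_singleton_iff, Prod.mk.injEq] at m1 m2
    omega
  have hAB : ∀ u v w u' v' w' : ℤ, rhombA u v w = rhombB u' v' w' → False := by
    intro u v w u' v' w' h
    have m1 : ((u,v,w) : ℤ×ℤ×ℤ) ∈ rhombB u' v' w' := by rw [← h]; simp [rhombA]
    have m2 : ((u,v-1,w) : ℤ×ℤ×ℤ) ∈ rhombB u' v' w' := by rw [← h]; simp [rhombA]
    simp only [rhombB, Set.mem_insert_iff, Set.mem_singleton_iff, Prod.mk.injEq] at m1 m2
    omega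
  have hAC : ∀ u v w u' v' w' : ℤ, rhombA u v w = rhombC u' v' w' → False := by
    intro u v w u' v' w' h
    have m1 : ((u,v,w) : ℤ×ℤ×ℤ) ∈ rhombC u' v' w' := by rw [← h]; simp [rhombA]
    have m2 : ((u,v,w-1) : ℤ×ℤ×ℤ) ∈ rhombC u' v' w' := by rw [← h]; simp [rhombA]
    simp only [rhombC, Set.mem_insert_iff, Set.mem_singleton_iff, Prod.mk.injEq] at m1 m2
    omega
  have hBC : ∀ u v w u' v' w' : ℤ, rhombB u v w = rhombC u' v' w' → False := by
    intro u v w u' v' w' h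
    have m1 : ((u,v,w) : ℤ×ℤ×ℤ) ∈ rhombC u' v' w' := by rw [← h]; simp [rhombB]
    have m2 : ((u,v,w-1) : ℤ×ℤ×ℤ) ∈ rhombC u' v' w' := by rw [← h]; simp [rhombB]
    simp only [rhombC, Set.mem_insert_iff, Set.mem_singleton_iff, Prod.mk.injEq] at m1 m2
    omega
  -- Triangles and the tiling map.
  set TriL : Set (ℤ×ℤ) := {q | q ∈ R2 ∧ (q.1-1, q.2-1) ∈ R2 ∧ (q.1, q.2-1) ∈ R2} with hTriL
  set TriU : Set (ℤ×ℤ) := {q | q ∈ R2 ∧ (q.1-1, q.2-1) ∈ R2 ∧ (q.1-1, q.2) ∈ R2} with hTriU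
  have hTriLmem : ∀ a b : ℤ, ((a,b) ∈ TriL ↔ ((a,b) ∈ R2 ∧ (a-1,b-1) ∈ R2 ∧ (a,b-1) ∈ R2)) := by
    intro a b; rw [hTriL]; exact Iff.rfl
  have hTriUmem : ∀ a b : ℤ, ((a,b) ∈ TriU ↔ ((a,b) ∈ R2 ∧ (a-1,b-1) ∈ R2 ∧ (a-1,b) ∈ R2)) := by
    intro a b; rw [hTriU]; exact Iff.rfl
  set ΦL : ℤ → ℤ → Set (ℤ×ℤ×ℤ) := fun a b =>
    if f (a-1) (b-1) = f a b then rhombA (f a b) (f a b + a) (f a b + b)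
    else if f a (b-1) = f a b then
      rhombB (f (a-1) (b-1)) (f (a-1) (b-1) + (a-1)) (f (a-1) (b-1) + (b-1))
    else rhombC (f a (b-1)) (f a (b-1) + a) (f a (b-1) + (b-1)) with hΦL
  set ΦU : ℤ → ℤ → Set (ℤ×ℤ×ℤ) := fun a b =>
    if f (a-1) (b-1) = f a b then rhombA (f a b) (f a b + a) (f a b + b)
    else if f (a-1) b = f a b then
      rhombC (f (a-1) (b-1)) (f (a-1) (b-1) + (a-1)) (f (a-1) (b-1) + (b-1))
    else rhombB (f (a-1) b) (f (a-1) b + (a-1)) (f (a-1) b + b) with hΦU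
  set Φ : (ℤ×ℤ)×Bool → Set (ℤ×ℤ×ℤ) := fun t =>
    if t.2 = true then ΦU t.1.1 t.1.2 else ΦL t.1.1 t.1.2 with hΦ
  have hΦf : ∀ a b : ℤ, Φ ((a,b), false) = ΦL a b := by intro a b; simp [hΦ]
  have hΦt : ∀ a b : ℤ, Φ ((a,b), true) = ΦU a b := by intro a b; simp [hΦ]
  set GT : Set ((ℤ×ℤ)×Bool) := ((fun q => (q, false)) '' TriL) ∪ ((fun q => (q, true)) '' TriU)
    with hGT
  have hGTmemf : ∀ a b : ℤ, (((a,b), false) ∈ GT ↔ (a,b) ∈ TriL) := by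
    intro a b
    rw [hGT]
    constructor
    · rintro (⟨q, hq, heq⟩ | ⟨q, hq, heq⟩) <;> simp only [Prod.mk.injEq] at heq
      · rcases heq with ⟨rfl, -⟩; exact hq
      · simp at heq
    · intro h; exact Or.inl ⟨(a,b), h, rfl⟩
  have hGTmemt : ∀ a b : ℤ, (((a,b), true) ∈ GT ↔ (a,b) ∈ TriU) := by
    intro a b
    rw [hGT]
    constructor
    · rintro (⟨q, hq, heq⟩ | ⟨q, hq, heq⟩) <;> simp only [Prod.mk.injEq] at heq
      · simp at heq
      · rcases heq with ⟨rfl, -⟩; exact hq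
    · intro h; exact Or.inr ⟨(a,b), h, rfl⟩
  -- The main goal set.
  set RH : Set (Set (ℤ×ℤ×ℤ)) := {R : Set (ℤ × ℤ × ℤ) | (∃ i j k : ℤ, R = rhombA i j k ∨
      R = rhombB i j k ∨ R = rhombC i j k) ∧ R ⊆ JS} with hRH
  -- Every good triangle maps to a rhombus of J.
  have memRH_L : ∀ a b : ℤ, (a,b) ∈ TriL → ΦL a b ∈ RH := by
    intro a b ht
    obtain ⟨r1, r2, r3⟩ := (hTriLmem a b).1 ht
    have q1 := (hR2mem a b).1 r1
    have q2 := (hR2mem (a-1) (b-1)).1 r2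
    have q3 := (hR2mem a (b-1)).1 r3
    have s1 := mono1 a b
    have s2 := mono2 (a-1) b
    have s3 := mono2 a b
    have s4 := mono1 a (b-1)
    have s5 := mono3 a b
    by_cases hA1 : f (a-1) (b-1) = f a b
    · have eval : ΦL a b = rhombA (f a b) (f a b + a) (f a b + b) := by
        simp only [hΦL]; rw [if_pos hA1]
      rw [hRH]
      refine ⟨⟨_, _, _, Or.inl eval⟩, ?_⟩
      rw [eval, subA]
      exact ⟨rfl, by omega, by omega, by omega, r1, (hR2mem _ _).2 (by omega), r3, r2⟩
    · by_cases hB1 : f a (b-1) = f a b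
      · have s6 : f (a-1) (b-1) ≤ f (a-1) (b-2) := by
          have := mono2 (a-1) (b-1); rwa [show b-1-1 = b-2 from by ring] at this
        have s7 : f (a-1) (b-2) ≤ f a (b-1) + 1 := by
          have := mono3 a (b-1); rwa [show b-1-1 = b-2 from by ring] at this
        have eval : ΦL a b
            = rhombB (f (a-1) (b-1)) (f (a-1) (b-1) + (a-1)) (f (a-1) (b-1) + (b-1)) := by
          simp only [hΦL]; rw [if_neg hA1, if_pos hB1]
        rw [hRH]
        refine ⟨⟨_, _, _, Or.inr (Or.inl eval)⟩, ?_⟩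
        rw [eval, subB']
        exact ⟨rfl, by omega, by omega, by omega, r2, r1, (hR2mem _ _).2 (by omega), r3⟩
      · have s6 : f (a+1) b ≤ f a b := by
          have := mono1 (a+1) b; rwa [show a+1-1 = a from by ring] at this
        have s7 : f a (b-1) ≤ f (a+1) b + 1 := by
          have := mono3 (a+1) b; rwa [show a+1-1 = a from by ring] at this
        have eval : ΦL a b = rhombC (f a (b-1)) (f a (b-1) + a) (f a (b-1) + (b-1)) := by
          simp only [hΦL]; rw [if_neg hA1, if_neg hB1]
        rw [hRH]
        refine ⟨⟨_, _, _, Or.inr (Or.inr eval)⟩, ?_⟩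
        rw [eval, subC']
        exact ⟨rfl, by omega, by omega, by omega, r3, (hR2mem _ _).2 (by omega), r2, r1⟩
  have memRH_U : ∀ a b : ℤ, (a,b) ∈ TriU → ΦU a b ∈ RH := by
    intro a b ht
    obtain ⟨r1, r2, r3⟩ := (hTriUmem a b).1 ht
    have q1 := (hR2mem a b).1 r1
    have q2 := (hR2mem (a-1) (b-1)).1 r2
    have q3 := (hR2mem (a-1) b).1 r3
    have s1 := mono1 a b
    have s2 := mono2 (a-1) b
    have s3 := mono2 a b
    have s4 := mono1 a (b-1)
    have s5 := mono3 a b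
    by_cases hA1 : f (a-1) (b-1) = f a b
    · have eval : ΦU a b = rhombA (f a b) (f a b + a) (f a b + b) := by
        simp only [hΦU]; rw [if_pos hA1]
      rw [hRH]
      refine ⟨⟨_, _, _, Or.inl eval⟩, ?_⟩
      rw [eval, subA]
      exact ⟨rfl, by omega, by omega, by omega, r1, r3, (hR2mem _ _).2 (by omega), r2⟩
    · by_cases hB1 : f (a-1) b = f a b
      · have s6 : f (a-1) (b-1) ≤ f (a-2) (b-1) := by
          have := mono1 (a-1) (b-1); rwa [show a-1-1 = a-2 from by ring] at this
        have s7 : f (a-2) (b-1) ≤ f (a-1) b + 1 := by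
          have := mono3 (a-1) b; rwa [show a-1-1 = a-2 from by ring] at this
        have eval : ΦU a b
            = rhombC (f (a-1) (b-1)) (f (a-1) (b-1) + (a-1)) (f (a-1) (b-1) + (b-1)) := by
          simp only [hΦU]; rw [if_neg hA1, if_pos hB1]
        rw [hRH]
        refine ⟨⟨_, _, _, Or.inr (Or.inr eval)⟩, ?_⟩
        rw [eval, subC'']
        exact ⟨rfl, by omega, by omega, by omega, r2, r1, (hR2mem _ _).2 (by omega), r3⟩
      · have s6 : f a (b+1) ≤ f a b := by
          have := mono2 a (b+1); rwa [show b+1-1 = b from by ring] at this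
        have s7 : f (a-1) b ≤ f a (b+1) + 1 := by
          have := mono3 a (b+1); rwa [show b+1-1 = b from by ring] at this
        have eval : ΦU a b = rhombB (f (a-1) b) (f (a-1) b + (a-1)) (f (a-1) b + b) := by
          simp only [hΦU]; rw [if_neg hA1, if_neg hB1]
        rw [hRH]
        refine ⟨⟨_, _, _, Or.inr (Or.inl eval)⟩, ?_⟩
        rw [eval, subB'']
        exact ⟨rfl, by omega, by omega, by omega, r3, (hR2mem _ _).2 (by omega), r2, r1⟩
  have allmem : ∀ t ∈ GT, Φ t ∈ RH := by
    rintro t (⟨⟨a,b⟩, hq, rfl⟩ | ⟨⟨a,b⟩, hq, rfl⟩)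
    · rw [hΦf]; exact memRH_L a b hq
    · rw [hΦt]; exact memRH_U a b hq
  -- Fibers of Φ over RH have exactly two elements.
  have fiber : ∀ RR ∈ RH, ∃ t1 t2 : (ℤ×ℤ)×Bool, t1 ≠ t2 ∧
      {t | t ∈ GT ∧ Φ t = RR} = {t1, t2} := by
    rintro RR hRR
    rw [hRH] at hRR
    obtain ⟨⟨i, j, k, hR⟩, hsubJ⟩ := hRR
    rcases hR with hR | hR | hR
    · -- type A
      have hR' : RR = rhombA i (i + (j-i)) (i + (k-i)) := by
        rw [hR, show i + (j-i) = j from by ring, show i + (k-i) = k from by ring]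
      set α := j - i with hα
      set β := k - i with hβ
      obtain ⟨e1, e2, e3, e4, r1, r2, r3, r4⟩ := (subA i α β).1 (by rw [← hR']; exact hsubJ)
      refine ⟨((α,β), false), ((α,β), true), by simp, ?_⟩
      ext ⟨⟨a,b⟩, c⟩
      simp only [Set.mem_setOf_eq, Set.mem_insert_iff, Set.mem_singleton_iff]
      constructor
      · rintro ⟨hGTm, hEq⟩
        cases c
        · rw [hΦf] at hEq
          simp only [hΦL] at hEq
          by_cases hA1 : f (a-1) (b-1) = f a b
          · rw [if_pos hA1] at hEq
            obtain ⟨g1, g2, g3⟩ := hAA _ _ _ _ _ _ (hEq.trans hR')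
            left
            obtain rfl : a = α := by omega
            obtain rfl : b = β := by omega
            rfl
          · rw [if_neg hA1] at hEq
            by_cases hB1 : f a (b-1) = f a b
            · rw [if_pos hB1] at hEq
              exact (hAB _ _ _ _ _ _ (hEq.trans hR').symm).elim
            · rw [if_neg hB1] at hEq
              exact (hAC _ _ _ _ _ _ (hEq.trans hR').symm).elim
        · rw [hΦt] at hEq
          simp only [hΦU] at hEq
          by_cases hA1 : f (a-1) (b-1) = f a b
          · rw [if_pos hA1] at hEq
            obtain ⟨g1, g2, g3⟩ := hAA _ _ _ _ _ _ (hEq.trans hR')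
            right
            obtain rfl : a = α := by omega
            obtain rfl : b = β := by omega
            rfl
          · rw [if_neg hA1] at hEq
            by_cases hB1 : f (a-1) b = f a b
            · rw [if_pos hB1] at hEq
              exact (hAC _ _ _ _ _ _ (hEq.trans hR').symm).elim
            · rw [if_neg hB1] at hEq
              exact (hAB _ _ _ _ _ _ (hEq.trans hR').symm).elim
      · rintro (h | h) <;>
          [(simp only [Prod.mk.injEq] at h; obtain ⟨⟨ha, hb⟩, hc⟩ := h; subst ha; subst hb; subst hc);
           (simp only [Prod.mk.injEq] at h; obtain ⟨⟨ha, hb⟩, hc⟩ := h; subst ha; subst hb; subst hc)]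
        · refine ⟨(hGTmemf α β).2 ((hTriLmem α β).2 ⟨r1, r4, r3⟩), ?_⟩
          rw [hΦf]
          simp only [hΦL]
          rw [if_pos (show f (α-1) (β-1) = f α β from by omega), ← e1, ← hR']
        · refine ⟨(hGTmemt α β).2 ((hTriUmem α β).2 ⟨r1, r4, r2⟩), ?_⟩
          rw [hΦt]
          simp only [hΦU]
          rw [if_pos (show f (α-1) (β-1) = f α β from by omega), ← e1, ← hR']
    · -- type B
      have hR' : RR = rhombB i (i + (j-i)) (i + (k-i)) := by
        rw [hR, show i + (j-i) = j from by ring, show i + (k-i) = k from by ring]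
      set α := j - i with hα
      set β := k - i with hβ
      obtain ⟨e1, e2, e3, e4, r1, r2, r3, r4⟩ := (subB i α β).1 (by rw [← hR']; exact hsubJ)
      refine ⟨((α+1,β+1), false), ((α+1,β), true), by simp, ?_⟩
      ext ⟨⟨a,b⟩, c⟩
      simp only [Set.mem_setOf_eq, Set.mem_insert_iff, Set.mem_singleton_iff]
      constructor
      · rintro ⟨hGTm, hEq⟩
        cases c
        · rw [hΦf] at hEq
          simp only [hΦL] at hEq
          by_cases hA1 : f (a-1) (b-1) = f a b
          · rw [if_pos hA1] at hEq
            exact (hAB _ _ _ _ _ _ (hEq.trans hR')).elim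
          · rw [if_neg hA1] at hEq
            by_cases hB1 : f a (b-1) = f a b
            · rw [if_pos hB1] at hEq
              obtain ⟨g1, g2, g3⟩ := hBB _ _ _ _ _ _ (hEq.trans hR')
              left
              obtain rfl : a = α + 1 := by omega
              obtain rfl : b = β + 1 := by omega
              rfl
            · rw [if_neg hB1] at hEq
              exact (hBC _ _ _ _ _ _ (hEq.trans hR').symm).elim
        · rw [hΦt] at hEq
          simp only [hΦU] at hEq
          by_cases hA1 : f (a-1) (b-1) = f a b
          · rw [if_pos hA1] at hEq
            exact (hAB _ _ _ _ _ _ (hEq.trans hR')).elim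
          · rw [if_neg hA1] at hEq
            by_cases hB1 : f (a-1) b = f a b
            · rw [if_pos hB1] at hEq
              exact (hBC _ _ _ _ _ _ (hEq.trans hR').symm).elim
            · rw [if_neg hB1] at hEq
              obtain ⟨g1, g2, g3⟩ := hBB _ _ _ _ _ _ (hEq.trans hR')
              right
              obtain rfl : a = α + 1 := by omega
              obtain rfl : b = β := by omega
              rfl
      · rintro (h | h) <;>
          [(simp only [Prod.mk.injEq] at h; obtain ⟨⟨ha, hb⟩, hc⟩ := h; subst ha; subst hb; subst hc);
           (simp only [Prod.mk.injEq] at h; obtain ⟨⟨ha, hb⟩, hc⟩ := h; subst ha; subst hb; subst hc)]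
        · refine ⟨(hGTmemf (α+1) (β+1)).2 ((hTriLmem (α+1) (β+1)).2
            ⟨r2, by rwa [show α+1-1 = α from by ring, show β+1-1 = β from by ring],
             by rwa [show β+1-1 = β from by ring]⟩), ?_⟩
          rw [hΦf]
          simp only [hΦL]
          rw [show α+1-1 = α from by ring, show β+1-1 = β from by ring]
          rw [if_neg (show ¬(f α β = f (α+1) (β+1)) from by omega),
            if_pos (show f (α+1) β = f (α+1) (β+1) from by omega), ← e1, ← hR']
        · refine ⟨(hGTmemt (α+1) β).2 ((hTriUmem (α+1) β).2
            ⟨r4, by rwa [show α+1-1 = α from by ring], by rwa [show α+1-1 = α from by ring]⟩), ?_⟩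
          rw [hΦt]
          simp only [hΦU]
          rw [show α+1-1 = α from by ring]
          rw [if_neg (show ¬(f α (β-1) = f (α+1) β) from by omega),
            if_neg (show ¬(f α β = f (α+1) β) from by omega), ← e1, ← hR']
    · -- type C
      have hR' : RR = rhombC i (i + (j-i)) (i + (k-i)) := by
        rw [hR, show i + (j-i) = j from by ring, show i + (k-i) = k from by ring]
      set α := j - i with hα
      set β := k - i with hβ
      obtain ⟨e1, e2, e3, e4, r1, r2, r3, r4⟩ := (subC i α β).1 (by rw [← hR']; exact hsubJ)
      refine ⟨((α,β+1), false), ((α+1,β+1), true), by simp, ?_⟩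
      ext ⟨⟨a,b⟩, c⟩
      simp only [Set.mem_setOf_eq, Set.mem_insert_iff, Set.mem_singleton_iff]
      constructor
      · rintro ⟨hGTm, hEq⟩
        cases c
        · rw [hΦf] at hEq
          simp only [hΦL] at hEq
          by_cases hA1 : f (a-1) (b-1) = f a b
          · rw [if_pos hA1] at hEq
            exact (hAC _ _ _ _ _ _ (hEq.trans hR')).elim
          · rw [if_neg hA1] at hEq
            by_cases hB1 : f a (b-1) = f a b
            · rw [if_pos hB1] at hEq
              exact (hBC _ _ _ _ _ _ (hEq.trans hR')).elim
            · rw [if_neg hB1] at hEq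
              obtain ⟨g1, g2, g3⟩ := hCC _ _ _ _ _ _ (hEq.trans hR')
              left
              obtain rfl : a = α := by omega
              obtain rfl : b = β + 1 := by omega
              rfl
        · rw [hΦt] at hEq
          simp only [hΦU] at hEq
          by_cases hA1 : f (a-1) (b-1) = f a b
          · rw [if_pos hA1] at hEq
            exact (hAC _ _ _ _ _ _ (hEq.trans hR')).elim
          · rw [if_neg hA1] at hEq
            by_cases hB1 : f (a-1) b = f a b
            · rw [if_pos hB1] at hEq
              obtain ⟨g1, g2, g3⟩ := hCC _ _ _ _ _ _ (hEq.trans hR')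
              right
              obtain rfl : a = α + 1 := by omega
              obtain rfl : b = β + 1 := by omega
              rfl
            · rw [if_neg hB1] at hEq
              exact (hBC _ _ _ _ _ _ (hEq.trans hR')).elim
      · rintro (h | h) <;>
          [(simp only [Prod.mk.injEq] at h; obtain ⟨⟨ha, hb⟩, hc⟩ := h; subst ha; subst hb; subst hc);
           (simp only [Prod.mk.injEq] at h; obtain ⟨⟨ha, hb⟩, hc⟩ := h; subst ha; subst hb; subst hc)]
        · refine ⟨(hGTmemf α (β+1)).2 ((hTriLmem α (β+1)).2
            ⟨r4, by rwa [show β+1-1 = β from by ring], by rwa [show β+1-1 = β from by ring]⟩), ?_⟩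
          rw [hΦf]
          simp only [hΦL]
          rw [show β+1-1 = β from by ring]
          rw [if_neg (show ¬(f (α-1) β = f α (β+1)) from by omega),
            if_neg (show ¬(f α β = f α (β+1)) from by omega), ← e1, ← hR']
        · refine ⟨(hGTmemt (α+1) (β+1)).2 ((hTriUmem (α+1) (β+1)).2
            ⟨r2, by rwa [show α+1-1 = α from by ring, show β+1-1 = β from by ring],
             by rwa [show α+1-1 = α from by ring]⟩), ?_⟩
          rw [hΦt]
          simp only [hΦU]
          rw [show α+1-1 = α from by ring, show β+1-1 = β from by ring]
          rw [if_neg (show ¬(f α β = f (α+1) (β+1)) from by omega),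
            if_pos (show f α (β+1) = f (α+1) (β+1) from by omega), ← e1, ← hR']
  -- Counting the triangles.
  have hTriLS : TriL = {v : ℤ×ℤ | v.1 + v.2 ≥ -((N:ℕ):ℤ) ∧ 2*v.1 - v.2 ≤ ((N:ℕ):ℤ)+1 ∧
      2*v.2 - v.1 ≤ ((N:ℕ):ℤ)+2} := by
    ext ⟨a,b⟩
    rw [hTriLmem a b, g_iff a b, g_iff (a-1) (b-1), g_iff a (b-1)]
    simp only [Set.mem_setOf_eq]
    omega
  obtain ⟨hTfin, hTcard⟩ := csReg_core N N N (by omega) (by omega) (by omega) (by omega) (by omega)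
  have hTriLfin : TriL.Finite := by rw [hTriLS]; exact hTfin
  have hTriLcard : TriL.ncard = 3 * Nat.choose (N+2) 2 := by
    rw [hTriLS, hTcard]; omega
  have hTriUS : TriU = Prod.swap '' {v : ℤ×ℤ | v.1 + v.2 ≥ -((N:ℕ):ℤ) ∧
      2*v.1 - v.2 ≤ ((N:ℕ):ℤ)+1 ∧ 2*v.2 - v.1 ≤ ((N:ℕ):ℤ)+2} := by
    ext ⟨a,b⟩
    rw [hTriUmem a b, g_iff a b, g_iff (a-1) (b-1), g_iff (a-1) b]
    constructor
    · intro h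
      exact ⟨(b,a), by simp only [Set.mem_setOf_eq]; omega, rfl⟩
    · rintro ⟨⟨x,y⟩, hxy, heq⟩
      simp only [Set.mem_setOf_eq] at hxy
      simp only [Prod.swap_prod_mk, Prod.mk.injEq] at heq
      omega
  have hTriUfin : TriU.Finite := by
    rw [hTriUS]; exact hTfin.image _
  have hTriUcard : TriU.ncard = 3 * Nat.choose (N+2) 2 := by
    rw [hTriUS, Set.ncard_image_of_injective _ Prod.swap_injective, hTcard]; omega
  have hGTfin : GT.Finite := by
    rw [hGT]; exact (hTriLfin.image _).union (hTriUfin.image _)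
  have hGTcard : GT.ncard = 6 * Nat.choose (N+2) 2 := by
    rw [hGT, Set.ncard_union_eq ?disj (hTriLfin.image _) (hTriUfin.image _),
      Set.ncard_image_of_injective _ ?inj1, Set.ncard_image_of_injective _ ?inj2,
      hTriLcard, hTriUcard]
    · omega
    case disj =>
      rw [Set.disjoint_left]
      rintro t ⟨q, hq, rfl⟩ ⟨q', hq', heq⟩
      simp at heq
    case inj1 => intro x y h; simpa using h
    case inj2 => intro x y h; simpa using h
  -- Double counting.
  set s : Finset ((ℤ×ℤ)×Bool) := hGTfin.toFinset with hs
  have hsc : (↑s : Set ((ℤ×ℤ)×Bool)) = GT := hGTfin.coe_toFinset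
  have himgRH : Φ '' GT = RH := by
    apply Set.Subset.antisymm
    · rintro _ ⟨t, ht, rfl⟩; exact allmem t ht
    · intro RR hRR
      obtain ⟨t1, t2, hne, hfeq⟩ := fiber RR hRR
      have ht1 : t1 ∈ {t | t ∈ GT ∧ Φ t = RR} := by rw [hfeq]; exact Set.mem_insert _ _
      exact ⟨t1, ht1.1, ht1.2⟩
  have hfibcard : ∀ b ∈ s.image Φ, (s.filter (fun a => Φ a = b)).card = 2 := by
    intro b hb
    have hbRH : b ∈ RH := by
      rw [← himgRH]
      obtain ⟨t, hts, rfl⟩ := Finset.mem_image.1 hb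
      exact ⟨t, by rw [← hsc]; exact_mod_cast hts, rfl⟩
    obtain ⟨t1, t2, hne, hfeq⟩ := fiber b hbRH
    have hft : s.filter (fun a => Φ a = b) = {t1, t2} := by
      ext t
      simp only [Finset.mem_filter, Finset.mem_insert, Finset.mem_singleton]
      have hmem : t ∈ s ↔ t ∈ GT := by rw [← hsc]; exact Iff.rfl
      have := Set.ext_iff.1 hfeq t
      simp only [Set.mem_setOf_eq, Set.mem_insert_iff, Set.mem_singleton_iff] at this
      rw [hmem]
      exact this
    rw [hft, Finset.card_pair hne]
  have hdc := cs_double_count s Φ hfibcard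
  have hRHcard : RH.ncard = (s.image Φ).card := by
    rw [← Set.ncard_coe_finset (s.image Φ), Finset.coe_image, hsc, himgRH]
  have hGTs : GT.ncard = s.card := by rw [← hsc, Set.ncard_coe_finset]
  show RH.ncard = 3 * Nat.choose (N + 2) 2
  omega
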